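/- Consider a commutative diagram of commutative ring homomorphisms with rows R → A → B and R' → A' → B' and vertical homomorphisms f_R : R → R', f_A : A → A', f : B → B'. If f_A is radicial and f is surjective, then the diagram is a Maranesi diagram, i.e. √(ker φ') = √(ker φ · (B' ⊗_{R'} B')). -/
import Mathlib


open scoped TensorProduct

/-- A ring homomorphism (here the structure map of the `S`-algebra `T`) is radicial if the
kernel of the canonical multiplication map `T ⊗[S] T → T` is a nil ideal. -/
def IsRadicial (S T : Type*) [CommRing S] [CommRing T] [Algebra S T] : Prop :=
  ∀ x ∈ RingHom.ker (Algebra.TensorProduct.lmul' (S := T) S).toRingHom, IsNilpotent x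

/-- Given a commutative diagram of commutative ring homomorphisms with rows
`R → A → B`, `R' → A' → B'` and vertical maps `f_R = algebraMap R R'`, `f_A = algebraMap A A'`,
`f = algebraMap B B'`, if `f_A` is radicial and `f` is surjective, then the diagram is a
Maranesi diagram: `√(ker φ') = √(ker φ · (B' ⊗[R'] B'))`, the extension being the ideal
generated by the image of `ker φ` under the induced map `f̄ : B ⊗[R] B → B' ⊗[R'] B'`. -/
theorem maranesi_of_radicial_of_surjective
    (R A B R' A' B' : Type*)
    [CommRing R] [CommRing A] [CommRing B] [CommRing R'] [CommRing A'] [CommRing B']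
    [Algebra R A] [Algebra A B] [Algebra R B] [IsScalarTower R A B]
    [Algebra R' A'] [Algebra A' B'] [Algebra R' B'] [IsScalarTower R' A' B']
    [Algebra R R'] [Algebra A A'] [Algebra B B']
    [Algebra R A'] [IsScalarTower R R' A'] [IsScalarTower R A A']
    [Algebra A B'] [IsScalarTower A A' B'] [IsScalarTower A B B']
    -- the canonical morphisms φ and φ'
    (φ : B ⊗[R] B →+* B ⊗[A] B)
    (hφ : ∀ x y : B, φ (x ⊗ₜ[R] y) = x ⊗ₜ[A] y)
    (φ' : B' ⊗[R'] B' →+* B' ⊗[A'] B')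
    (hφ' : ∀ x y : B', φ' (x ⊗ₜ[R'] y) = x ⊗ₜ[A'] y)
    -- the induced map f̄ : B ⊗[R] B → B' ⊗[R'] B'
    (fbar : B ⊗[R] B →+* B' ⊗[R'] B')
    (hfbar : ∀ x y : B, fbar (x ⊗ₜ[R] y) = (algebraMap B B' x) ⊗ₜ[R'] (algebraMap B B' y))
    -- f_A is radicial and f is surjective
    (hrad : IsRadicial A A')
    (hsurj : Function.Surjective (algebraMap B B')) :
    (RingHom.ker φ').radical = ((RingHom.ker φ).map fbar).radical := by
  classical
  set J : Ideal (B' ⊗[R'] B') := (RingHom.ker φ).map fbar with hJdef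
  -- basic commutation facts
  have htow : ∀ a : A, algebraMap B B' (algebraMap A B a)
      = algebraMap A' B' (algebraMap A A' a) := fun a => by
    rw [← IsScalarTower.algebraMap_apply, ← IsScalarTower.algebraMap_apply]
  have commA : ∀ a : A, (algebraMap A B a) ⊗ₜ[A] (1 : B)
      = (1 : B) ⊗ₜ[A] (algebraMap A B a) := fun a => by
    rw [Algebra.algebraMap_eq_smul_one, TensorProduct.smul_tmul]
  have commA' : ∀ a' : A', (algebraMap A' B' a') ⊗ₜ[A'] (1 : B')
      = (1 : B') ⊗ₜ[A'] (algebraMap A' B' a') := fun a' => by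
    rw [Algebra.algebraMap_eq_smul_one, TensorProduct.smul_tmul]
  have kergen : ∀ a : A, (algebraMap A B a) ⊗ₜ[R] (1 : B)
      - (1 : B) ⊗ₜ[R] (algebraMap A B a) ∈ RingHom.ker φ := fun a => by
    rw [RingHom.mem_ker, map_sub, hφ, hφ, commA, sub_self]
  have genJ : ∀ a : A,
      (algebraMap A' B' (algebraMap A A' a)) ⊗ₜ[R'] (1 : B')
      - (1 : B') ⊗ₜ[R'] (algebraMap A' B' (algebraMap A A' a)) ∈ J := fun a => by
    have h := Ideal.mem_map_of_mem fbar (kergen a)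
    rwa [map_sub, hfbar, hfbar, map_one, htow] at h
  -- Step A : J ≤ ker φ'
  have hA : J ≤ RingHom.ker φ' := by
    letI : Algebra A (B' ⊗[A'] B') :=
      ((Algebra.TensorProduct.includeLeftRingHom
        (R := A') (A := B') (B := B')).comp (algebraMap A B')).toAlgebra
    have halgT : ∀ a : A,
        algebraMap A (B' ⊗[A'] B') a = (algebraMap A B' a) ⊗ₜ[A'] (1 : B') := fun _ => rfl
    let h1 : B →ₐ[A] B' ⊗[A'] B' :=
      { toRingHom := (Algebra.TensorProduct.includeLeftRingHom
          (R := A') (A := B') (B := B')).comp (algebraMap B B'),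
        commutes' := fun a => by
          show (algebraMap B B' (algebraMap A B a)) ⊗ₜ[A'] (1 : B') = _
          rw [halgT, ← IsScalarTower.algebraMap_apply] }
    let h2 : B →ₐ[A] B' ⊗[A'] B' :=
      { toRingHom := (Algebra.TensorProduct.includeRight
          (R := A') (A := B') (B := B')).toRingHom.comp (algebraMap B B'),
        commutes' := fun a => by
          show (1 : B') ⊗ₜ[A'] (algebraMap B B' (algebraMap A B a)) = _
          rw [halgT, ← IsScalarTower.algebraMap_apply A B B',
            IsScalarTower.algebraMap_apply A A' B', commA'] }
    let h := Algebra.TensorProduct.productMap h1 h2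
    have Hcomm : ∀ z : B ⊗[R] B, φ' (fbar z) = h (φ z) := by
      intro z
      induction z using TensorProduct.induction_on with
      | zero => simp
      | tmul x y =>
          rw [hfbar, hφ', hφ, Algebra.TensorProduct.productMap_apply_tmul]
          show _ = ((algebraMap B B' x) ⊗ₜ[A'] (1 : B'))
            * ((1 : B') ⊗ₜ[A'] (algebraMap B B' y))
          rw [Algebra.TensorProduct.tmul_mul_tmul, mul_one, one_mul]
      | add x y hx hy => rw [map_add, map_add, map_add, map_add, hx, hy]
    refine Ideal.map_le_iff_le_comap.mpr ?_
    intro z hz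
    rw [RingHom.mem_ker] at hz
    rw [Ideal.mem_comap, RingHom.mem_ker, Hcomm, hz, map_zero]
  -- Step B : each generator of ker φ' is in √J
  have nilgen : ∀ a' : A',
      (algebraMap A' B' a') ⊗ₜ[R'] (1 : B')
      - (1 : B') ⊗ₜ[R'] (algebraMap A' B' a') ∈ J.radical := by
    intro a'
    letI : Algebra A ((B' ⊗[R'] B') ⧸ J) :=
      ((Ideal.Quotient.mk J).comp ((Algebra.TensorProduct.includeLeftRingHom
        (R := R') (A := B') (B := B')).comp (algebraMap A B'))).toAlgebra
    have halgQ : ∀ a : A, algebraMap A ((B' ⊗[R'] B') ⧸ J) a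
        = Ideal.Quotient.mk J ((algebraMap A B' a) ⊗ₜ[R'] (1 : B')) := fun _ => rfl
    let α : A' →ₐ[A] (B' ⊗[R'] B') ⧸ J :=
      { toRingHom := (Ideal.Quotient.mk J).comp
          ((Algebra.TensorProduct.includeLeftRingHom
            (R := R') (A := B') (B := B')).comp (algebraMap A' B')),
        commutes' := fun a => by
          show Ideal.Quotient.mk J
            ((algebraMap A' B' (algebraMap A A' a)) ⊗ₜ[R'] (1 : B')) = _
          rw [halgQ, IsScalarTower.algebraMap_apply A A' B'] }
    let β : A' →ₐ[A] (B' ⊗[R'] B') ⧸ J :=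
      { toRingHom := (Ideal.Quotient.mk J).comp
          ((Algebra.TensorProduct.includeRight
            (R := R') (A := B') (B := B')).toRingHom.comp (algebraMap A' B')),
        commutes' := fun a => by
          show Ideal.Quotient.mk J
            ((1 : B') ⊗ₜ[R'] (algebraMap A' B' (algebraMap A A' a))) = _
          rw [halgQ, IsScalarTower.algebraMap_apply A A' B',
            Ideal.Quotient.mk_eq_mk_iff_sub_mem]
          simpa [neg_sub] using J.neg_mem (genJ a) }
    let ψ := Algebra.TensorProduct.productMap α β
    set t : A' ⊗[A] A' := a' ⊗ₜ[A] (1 : A') - (1 : A') ⊗ₜ[A] a' with ht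
    have hker : t ∈ RingHom.ker (Algebra.TensorProduct.lmul' (S := A') A).toRingHom := by
      rw [RingHom.mem_ker, ht, map_sub]
      show Algebra.TensorProduct.lmul' A (a' ⊗ₜ[A] (1 : A'))
        - Algebra.TensorProduct.lmul' A ((1 : A') ⊗ₜ[A] a') = 0
      rw [Algebra.TensorProduct.lmul'_apply_tmul, Algebra.TensorProduct.lmul'_apply_tmul,
        mul_one, one_mul, sub_self]
    obtain ⟨n, hn⟩ := hrad t hker
    have hψt : ψ t = Ideal.Quotient.mk J
        ((algebraMap A' B' a') ⊗ₜ[R'] (1 : B')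
          - (1 : B') ⊗ₜ[R'] (algebraMap A' B' a')) := by
      rw [ht, map_sub, map_sub]
      rw [show ψ (a' ⊗ₜ[A] (1 : A')) = α a' * β 1 from
        Algebra.TensorProduct.productMap_apply_tmul α β a' 1]
      rw [show ψ ((1 : A') ⊗ₜ[A] a') = α 1 * β a' from
        Algebra.TensorProduct.productMap_apply_tmul α β 1 a']
      rw [map_one, map_one, mul_one, one_mul]
      rfl
    have hzero : (Ideal.Quotient.mk J
        ((algebraMap A' B' a') ⊗ₜ[R'] (1 : B')
          - (1 : B') ⊗ₜ[R'] (algebraMap A' B' a'))) ^ n = 0 := by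
      rw [← hψt, ← map_pow, hn, map_zero]
    rw [← map_pow, Ideal.Quotient.eq_zero_iff_mem] at hzero
    exact Ideal.mem_radical_iff.mpr ⟨n, hzero⟩
  -- Step C : ker φ' ≤ √J
  have hC : RingHom.ker φ' ≤ J.radical := by
    let c1 : B' →ₐ[A'] (B' ⊗[R'] B') ⧸ J.radical :=
      { toRingHom := (Ideal.Quotient.mk J.radical).comp
          (Algebra.TensorProduct.includeLeftRingHom (R := R') (A := B') (B := B')),
        commutes' := fun a' => rfl }
    let c2 : B' →ₐ[A'] (B' ⊗[R'] B') ⧸ J.radical :=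
      { toRingHom := (Ideal.Quotient.mk J.radical).comp
          (Algebra.TensorProduct.includeRight (R := R') (A := B') (B := B')).toRingHom,
        commutes' := fun a' => by
          show Ideal.Quotient.mk J.radical ((1 : B') ⊗ₜ[R'] (algebraMap A' B' a')) = _
          have : algebraMap A' ((B' ⊗[R'] B') ⧸ J.radical) a'
              = Ideal.Quotient.mk J.radical ((algebraMap A' B' a') ⊗ₜ[R'] (1 : B')) := rfl
          rw [this, Ideal.Quotient.mk_eq_mk_iff_sub_mem]
          simpa [neg_sub] using (J.radical).neg_mem (nilgen a') }
    let χ := Algebra.TensorProduct.productMap c1 c2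
    have Hχ : ∀ w : B' ⊗[R'] B', χ (φ' w) = Ideal.Quotient.mk J.radical w := by
      intro w
      induction w using TensorProduct.induction_on with
      | zero => simp
      | tmul x y =>
          rw [hφ', Algebra.TensorProduct.productMap_apply_tmul]
          show Ideal.Quotient.mk J.radical (x ⊗ₜ[R'] (1 : B'))
            * Ideal.Quotient.mk J.radical ((1 : B') ⊗ₜ[R'] y) = _
          rw [← map_mul, Algebra.TensorProduct.tmul_mul_tmul, mul_one, one_mul]
      | add x y hx hy => rw [map_add, map_add, map_add, hx, hy]
    intro w hw
    rw [RingHom.mem_ker] at hw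
    have h0 := Hχ w
    rw [hw, map_zero] at h0
    exact Ideal.Quotient.eq_zero_iff_mem.mp h0.symm
  apply le_antisymm
  · have h := Ideal.radical_mono hC
    rwa [Ideal.radical_idem] at h
  · exact Ideal.radical_mono hA
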